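/- Correctness of the reduction from subgraph isomorphism to pivoted subgraph isomorphism: let G_1 and G_2 be directed graphs given by irreflexive edge relations on vertex sets V_1 and V_2. Form G_1' by adjoining a new vertex v_1 ∉ V_1 together with an edge from v_1 to every vertex of V_1, and form G_2' analogously with a new vertex v_2 ∉ V_2. Then there exists an injective homomorphism from G_1 to G_2 if and only if there exists an injective homomorphism from G_1' to G_2' that maps v_1 to v_2. -/
import Mathlib


/-- A labeled graph over vertex-label alphabet `SV` and edge-label alphabet `SE`:
a vertex set, a set of vertex labels, and a set of labeled edges with no loops. -/
structure LabeledGraph (V SV SE : Type*) where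
  verts : Set V
  labels : Set (V × SV)
  edges : Set (V × V × SE)
  labels_sub : ∀ ⦃p : V × SV⦄, p ∈ labels → p.1 ∈ verts
  edges_sub : ∀ ⦃q : V × V × SE⦄, q ∈ edges → q.1 ∈ verts ∧ q.2.1 ∈ verts
  no_loops : ∀ ⦃q : V × V × SE⦄, q ∈ edges → q.1 ≠ q.2.1

/-- An element of a labeled graph: a vertex label or a labeled edge. -/
abbrev GraphElement (V SV SE : Type*) := (V × SV) ⊕ (V × V × SE)

namespace LabeledGraph

variable {V SV SE : Type*}

/-- Adjacency, ignoring edge directions. -/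
def Adj (G : LabeledGraph V SV SE) (x y : V) : Prop :=
  ∃ l, (x, y, l) ∈ G.edges ∨ (y, x, l) ∈ G.edges

/-- The size of a labeled graph: number of vertex labels plus number of labeled edges. -/
noncomputable def size (G : LabeledGraph V SV SE) : ℕ := G.labels.ncard + G.edges.ncard

/-- Membership of an element in a labeled graph. -/
def HasElement (G : LabeledGraph V SV SE) : GraphElement V SV SE → Prop
  | Sum.inl p => p ∈ G.labels
  | Sum.inr q => q ∈ G.edges

/-- A vertex is occupied (not isolated) w.r.t. given label and edge sets if it
carries some vertex label or is incident to some labeled edge. -/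
def Occupied (labels : Set (V × SV)) (edges : Set (V × V × SE)) (x : V) : Prop :=
  (∃ l, (x, l) ∈ labels) ∨ (∃ u l, (x, u, l) ∈ edges ∨ (u, x, l) ∈ edges)

/-- The vertex labels remaining after deleting an element. -/
def delLabels (G : LabeledGraph V SV SE) : GraphElement V SV SE → Set (V × SV)
  | Sum.inl p => G.labels \ {p}
  | Sum.inr _ => G.labels

/-- The labeled edges remaining after deleting an element. -/
def delEdges (G : LabeledGraph V SV SE) : GraphElement V SV SE → Set (V × V × SE)
  | Sum.inl _ => G.edges
  | Sum.inr q => G.edges \ {q}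

lemma delLabels_subset (G : LabeledGraph V SV SE) (e : GraphElement V SV SE) :
    G.delLabels e ⊆ G.labels := by
  cases e with
  | inl p => exact Set.diff_subset
  | inr q => exact subset_rfl

lemma delEdges_subset (G : LabeledGraph V SV SE) (e : GraphElement V SV SE) :
    G.delEdges e ⊆ G.edges := by
  cases e with
  | inl p => exact subset_rfl
  | inr q => exact Set.diff_subset

/-- Removing an element from a labeled graph: delete that vertex label or labeled
edge, and additionally delete any vertex thereby left isolated. -/
def removeElement (G : LabeledGraph V SV SE) (e : GraphElement V SV SE) :
    LabeledGraph V SV SE where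
  verts := {x ∈ G.verts |
    Occupied (G.delLabels e) (G.delEdges e) x ∨ ¬ Occupied G.labels G.edges x}
  labels := G.delLabels e
  edges := G.delEdges e
  labels_sub := fun p hp =>
    ⟨G.labels_sub (G.delLabels_subset e hp), Or.inl (Or.inl ⟨p.2, hp⟩)⟩
  edges_sub := fun q hq =>
    ⟨⟨(G.edges_sub (G.delEdges_subset e hq)).1,
        Or.inl (Or.inr ⟨q.2.1, q.2.2, Or.inl hq⟩)⟩,
      ⟨(G.edges_sub (G.delEdges_subset e hq)).2,
        Or.inl (Or.inr ⟨q.1, q.2.2, Or.inr hq⟩)⟩⟩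
  no_loops := fun q hq => G.no_loops (G.delEdges_subset e hq)

/-- Connectivity of a (non-pivoted) labeled graph: every pair of its vertices is
joined by a path of edges, ignoring edge directions. -/
def ConnectedGraph (G : LabeledGraph V SV SE) : Prop :=
  ∀ x ∈ G.verts, ∀ y ∈ G.verts, Relation.ReflTransGen G.Adj x y

/-- A leaf vertex: incident to exactly one labeled edge. -/
def IsLeafVertex (G : LabeledGraph V SV SE) (x : V) : Prop :=
  ∃! q : V × V × SE, q ∈ G.edges ∧ (q.1 = x ∨ q.2.1 = x)

/-- A cycle in the underlying undirected multigraph: a closed walk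
`ws` using pairwise distinct labeled edges `es`. -/
def IsCycle (G : LabeledGraph V SV SE) (es : List (V × V × SE)) (ws : List V) : Prop :=
  es ≠ [] ∧ es.Nodup ∧
  ws.length = es.length + 1 ∧ ws.head? = ws.getLast? ∧
  ∀ i q, es[i]? = some q → q ∈ G.edges ∧
    ∃ u w, ws[i]? = some u ∧ ws[i+1]? = some w ∧
      ((q.1 = u ∧ q.2.1 = w) ∨ (q.1 = w ∧ q.2.1 = u))

end LabeledGraph

/-- A pivoted graph: a labeled graph with a distinguished vertex, the pivot. -/
structure PivotedGraph (V SV SE : Type*) extends LabeledGraph V SV SE where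
  pivot : V
  pivot_mem : pivot ∈ verts

/-- Pivoted subgraph isomorphism `P₁ ⊆_f P₂`: an injective map on vertices preserving
vertex labels and labeled edges and sending pivot to pivot. -/
def PSubIso {V₁ V₂ SV SE : Type*}
    (P₁ : PivotedGraph V₁ SV SE) (P₂ : PivotedGraph V₂ SV SE) : Prop :=
  ∃ f : V₁ → V₂,
    Set.MapsTo f P₁.verts P₂.verts ∧
    Set.InjOn f P₁.verts ∧
    (∀ ⦃x : V₁⦄ ⦃l : SV⦄, (x, l) ∈ P₁.labels → (f x, l) ∈ P₂.labels) ∧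
    (∀ ⦃x y : V₁⦄ ⦃l : SE⦄, (x, y, l) ∈ P₁.edges → (f x, f y, l) ∈ P₂.edges) ∧
    f P₁.pivot = P₂.pivot

/-- The match set `M_G(P)`: all vertices `v` of `G` such that `P ⊆_f ⟨G, v⟩`. -/
def matchSet {V V' SV SE : Type*} (G : LabeledGraph V SV SE)
    (P : PivotedGraph V' SV SE) : Set V :=
  {x | ∃ hx : x ∈ G.verts, PSubIso P ⟨G, x, hx⟩}

namespace PivotedGraph

variable {V SV SE : Type*}

/-- A pivoted graph is connected if every vertex is joined to the pivot by a path
of edges, ignoring edge directions. (A neighborhood pattern is a connected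
pivoted graph.) -/
def Connected (P : PivotedGraph V SV SE) : Prop :=
  ∀ x ∈ P.verts, Relation.ReflTransGen P.toLabeledGraph.Adj x P.pivot

/-- Removing the element `e` from `P` yields a connected pivoted graph (with the
same pivot). -/
def ConnectedAfterRemove (P : PivotedGraph V SV SE) (e : GraphElement V SV SE) : Prop :=
  P.pivot ∈ (P.toLabeledGraph.removeElement e).verts ∧
  ∀ x ∈ (P.toLabeledGraph.removeElement e).verts,
    Relation.ReflTransGen (P.toLabeledGraph.removeElement e).Adj x P.pivot

/-- A neighborhood pattern is decomposable if it has two distinct elements such that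
removing either one yields a connected pivoted graph. -/
def Decomposable (P : PivotedGraph V SV SE) : Prop :=
  ∃ e₁ e₂ : GraphElement V SV SE, e₁ ≠ e₂ ∧
    P.toLabeledGraph.HasElement e₁ ∧ P.toLabeledGraph.HasElement e₂ ∧
    P.ConnectedAfterRemove e₁ ∧ P.ConnectedAfterRemove e₂

/-- A path pattern: the edges, with directions ignored, form a simple path (given by
the list of vertices `vs`) having the pivot as one endpoint, with at most one vertex
label, which (if present) is on the other endpoint of the path. -/
def IsPathPattern (P : PivotedGraph V SV SE) : Prop :=
  ∃ vs : List V,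
    vs ≠ [] ∧ vs.Nodup ∧ vs.head? = some P.pivot ∧
    P.verts = {x | x ∈ vs} ∧
    (∀ q ∈ P.edges, ∃ i u w, vs[i]? = some u ∧ vs[i + 1]? = some w ∧
      ((q.1 = u ∧ q.2.1 = w) ∨ (q.1 = w ∧ q.2.1 = u))) ∧
    (∀ i u w, vs[i]? = some u → vs[i + 1]? = some w →
      ∃! q : V × V × SE, q ∈ P.edges ∧
        ((q.1 = u ∧ q.2.1 = w) ∨ (q.1 = w ∧ q.2.1 = u))) ∧
    P.labels.Subsingleton ∧
    (∀ p ∈ P.labels, vs.getLast? = some p.1)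

end PivotedGraph

/-- An injective match of a labeled graph pattern `P` in a labeled graph `G`:
an injective map from the vertices of `P` to those of `G` carrying vertex labels
to vertex labels and labeled edges to labeled edges. -/
def MatchOn {V V' SV SE : Type*} (P : LabeledGraph V' SV SE) (G : LabeledGraph V SV SE)
    (f : P.verts → V) : Prop :=
  (∀ x, f x ∈ G.verts) ∧ Function.Injective f ∧
  (∀ ⦃p : V' × SV⦄ (hp : p ∈ P.labels), (f ⟨p.1, P.labels_sub hp⟩, p.2) ∈ G.labels) ∧
  (∀ ⦃q : V' × V' × SE⦄ (hq : q ∈ P.edges),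
    (f ⟨q.1, (P.edges_sub hq).1⟩, f ⟨q.2.1, (P.edges_sub hq).2⟩, q.2.2) ∈ G.edges)

/-- Adjoin a new vertex (`none`) to a directed graph, with an edge from the new vertex
to every original vertex. -/
def adjoinVertex {V : Type*} (E : V → V → Prop) : Option V → Option V → Prop
  | some u, some w => E u w
  | none, some _ => True
  | _, _ => False

/-- Correctness of the reduction from subgraph isomorphism to pivoted
subgraph isomorphism: for directed graphs `G₁`, `G₂` given by irreflexive edge
relations, there is an injective homomorphism `G₁ → G₂` iff there is an injective
homomorphism `G₁' → G₂'` of the adjoined graphs mapping the new vertex `v₁` (= `none`)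
to the new vertex `v₂` (= `none`). -/
theorem reduction_correct {V₁ V₂ : Type*} (E₁ : V₁ → V₁ → Prop) (E₂ : V₂ → V₂ → Prop)
    (h₁ : Irreflexive E₁) (h₂ : Irreflexive E₂) :
    (∃ f : V₁ → V₂, Function.Injective f ∧ ∀ u w, E₁ u w → E₂ (f u) (f w)) ↔
    (∃ g : Option V₁ → Option V₂, Function.Injective g ∧
      (∀ a b : Option V₁, adjoinVertex E₁ a b → adjoinVertex E₂ (g a) (g b)) ∧
      g none = none) := by
  constructor
  · rintro ⟨f, hf, hedge⟩
    refine ⟨Option.map f, Option.map_injective hf, ?_, rfl⟩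
    rintro (a|a) (b|b) h
    · exact h.elim
    · trivial
    · exact h.elim
    · exact hedge _ _ h
  · rintro ⟨g, hg, hedge, hnone⟩
    have hsome : ∀ v : V₁, ∃ w, g (some v) = some w := by
      intro v
      cases hv : g (some v) with
      | none => exact absurd (hg (hv.trans hnone.symm)) (by simp)
      | some w => exact ⟨w, rfl⟩
    choose f hfspec using hsome
    refine ⟨f, fun a b hab => ?_, fun u w h => ?_⟩
    · have := hg ((hfspec a).trans (by rw [hab, ← hfspec b]))
      simpa using this
    · have := hedge (some u) (some w) h
      rwa [hfspec u, hfspec w] at this
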